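/- Fix natural numbers p, l1, l2, l3, k1, k2, k3. For every ε > 0 there exists Q such that for every finite field F with |F| ≥ Q and all matrices A1 ∈ F^{p×l1}, A2 ∈ F^{p×l2}, A3 ∈ F^{p×l3} satisfying k1 ≤ rank(A1), k2 ≤ rank(A2), k3 ≤ rank(A3), k1+k2 ≤ rank([A1 | A2]), k1+k3 ≤ rank([A1 | A3]), k2+k3 ≤ rank([A2 | A3]), and k1+k2+k3 ≤ rank([A1 | A2 | A3]), the number of triples (E1, E2, E3) ∈ F^{l1×k1} × F^{l2×k2} × F^{l3×k3} with rank([A1·E1 | A2·E2 | A3·E3]) = k1+k2+k3 is at least (1 − ε) · |F|^{l1·k1 + l2·k2 + l3·k3}. -/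

import Mathlib

open Matrix Module Finset

section Aux

variable {F : Type} [Field F] [Fintype F]

/-- `M ↦ M *ᵥ c` as a linear map in the matrix `M`. -/
def mvR {l k : ℕ} (c : Fin k → F) : Matrix (Fin l) (Fin k) F →ₗ[F] (Fin l → F) where
  toFun M := M *ᵥ c
  map_add' M N := Matrix.add_mulVec M N c
  map_smul' a M := by simp [Matrix.smul_mulVec]

@[simp] lemma mvR_apply {l k : ℕ} (c : Fin k → F) (M : Matrix (Fin l) (Fin k) F) :
    mvR c M = M *ᵥ c := rfl

lemma mvR_surjective {l k : ℕ} {c : Fin k → F} (hc : c ≠ 0) :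
    Function.Surjective (mvR (l := l) c) := by
  obtain ⟨j0, hj0⟩ : ∃ j, c j ≠ 0 := by
    by_contra h; push_neg at h; exact hc (funext h)
  intro v
  refine ⟨Matrix.of fun i j => if j = j0 then v i * (c j0)⁻¹ else 0, ?_⟩
  funext i
  simp only [mvR_apply, Matrix.mulVec, dotProduct, Matrix.of_apply]
  rw [Finset.sum_eq_single j0]
  · simp [hj0]
  · intro b _ hb; simp [hb]
  · simp

lemma range_mulVecLin_fromColumns {p : ℕ} {n₁ n₂ : Type} [Fintype n₁] [Fintype n₂]
    (A : Matrix (Fin p) n₁ F) (B : Matrix (Fin p) n₂ F) :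
    LinearMap.range (fromCols A B).mulVecLin =
      LinearMap.range A.mulVecLin ⊔ LinearMap.range B.mulVecLin := by
  apply le_antisymm
  · rintro w ⟨v, rfl⟩
    have hv : v = Sum.elim (v ∘ Sum.inl) (v ∘ Sum.inr) := by
      funext x; cases x <;> rfl
    rw [Matrix.mulVecLin_apply, hv, fromCols_mulVec_sumElim]
    exact Submodule.add_mem_sup ⟨_, rfl⟩ ⟨_, rfl⟩
  · rw [sup_le_iff]
    constructor
    · rintro w ⟨v, rfl⟩
      exact ⟨Sum.elim v 0, by simp⟩
    · rintro w ⟨v, rfl⟩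
      exact ⟨Sum.elim 0 v, by simp⟩

variable {p l1 l2 l3 k1 k2 k3 : ℕ}

/-- The linear map `(E1,E2,E3) ↦ A1·E1·c1 + A2·E2·c2 + A3·E3·c3`. -/
def Psi (A1 : Matrix (Fin p) (Fin l1) F) (A2 : Matrix (Fin p) (Fin l2) F)
    (A3 : Matrix (Fin p) (Fin l3) F)
    (c : (Fin k1 → F) × (Fin k2 → F) × (Fin k3 → F)) :
    (Matrix (Fin l1) (Fin k1) F × Matrix (Fin l2) (Fin k2) F × Matrix (Fin l3) (Fin k3) F)
      →ₗ[F] (Fin p → F) :=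
  A1.mulVecLin ∘ₗ mvR c.1 ∘ₗ LinearMap.fst F _ _
  + A2.mulVecLin ∘ₗ mvR c.2.1 ∘ₗ (LinearMap.fst F _ _ ∘ₗ LinearMap.snd F _ _)
  + A3.mulVecLin ∘ₗ mvR c.2.2 ∘ₗ (LinearMap.snd F _ _ ∘ₗ LinearMap.snd F _ _)

lemma Psi_apply (A1 : Matrix (Fin p) (Fin l1) F) (A2 : Matrix (Fin p) (Fin l2) F)
    (A3 : Matrix (Fin p) (Fin l3) F)
    (c : (Fin k1 → F) × (Fin k2 → F) × (Fin k3 → F))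
    (E : Matrix (Fin l1) (Fin k1) F × Matrix (Fin l2) (Fin k2) F × Matrix (Fin l3) (Fin k3) F) :
    Psi A1 A2 A3 c E =
      A1 *ᵥ (E.1 *ᵥ c.1) + A2 *ᵥ (E.2.1 *ᵥ c.2.1) + A3 *ᵥ (E.2.2 *ᵥ c.2.2) := rfl

lemma Psi_smul (A1 : Matrix (Fin p) (Fin l1) F) (A2 : Matrix (Fin p) (Fin l2) F)
    (A3 : Matrix (Fin p) (Fin l3) F) (a : F)
    (c : (Fin k1 → F) × (Fin k2 → F) × (Fin k3 → F))
    (E : Matrix (Fin l1) (Fin k1) F × Matrix (Fin l2) (Fin k2) F × Matrix (Fin l3) (Fin k3) F) :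
    Psi A1 A2 A3 (a • c) E = a • Psi A1 A2 A3 c E := by
  simp [Psi_apply, Matrix.mulVec_smul, smul_add]

lemma range_le_Psi_1 (A1 : Matrix (Fin p) (Fin l1) F) (A2 : Matrix (Fin p) (Fin l2) F)
    (A3 : Matrix (Fin p) (Fin l3) F)
    {c : (Fin k1 → F) × (Fin k2 → F) × (Fin k3 → F)} (hc : c.1 ≠ 0) :
    LinearMap.range A1.mulVecLin ≤ LinearMap.range (Psi A1 A2 A3 c) := by
  rintro w ⟨v, rfl⟩
  obtain ⟨E1, hE1⟩ := mvR_surjective (l := l1) hc v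
  refine ⟨(E1, 0, 0), ?_⟩
  simp only [Psi_apply, mvR_apply] at hE1 ⊢
  simp [hE1]

lemma range_le_Psi_2 (A1 : Matrix (Fin p) (Fin l1) F) (A2 : Matrix (Fin p) (Fin l2) F)
    (A3 : Matrix (Fin p) (Fin l3) F)
    {c : (Fin k1 → F) × (Fin k2 → F) × (Fin k3 → F)} (hc : c.2.1 ≠ 0) :
    LinearMap.range A2.mulVecLin ≤ LinearMap.range (Psi A1 A2 A3 c) := by
  rintro w ⟨v, rfl⟩
  obtain ⟨E2, hE2⟩ := mvR_surjective (l := l2) hc v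
  refine ⟨(0, E2, 0), ?_⟩
  simp only [Psi_apply, mvR_apply] at hE2 ⊢
  simp [hE2]

lemma range_le_Psi_3 (A1 : Matrix (Fin p) (Fin l1) F) (A2 : Matrix (Fin p) (Fin l2) F)
    (A3 : Matrix (Fin p) (Fin l3) F)
    {c : (Fin k1 → F) × (Fin k2 → F) × (Fin k3 → F)} (hc : c.2.2 ≠ 0) :
    LinearMap.range A3.mulVecLin ≤ LinearMap.range (Psi A1 A2 A3 c) := by
  rintro w ⟨v, rfl⟩
  obtain ⟨E3, hE3⟩ := mvR_surjective (l := l3) hc v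
  refine ⟨(0, 0, E3), ?_⟩
  simp only [Psi_apply, mvR_apply] at hE3 ⊢
  simp [hE3]

/-- Counting the fiber of a linear map over `0`. -/
lemma card_ker_le {M W : Type} [AddCommGroup M] [Module F M] [Fintype M] [DecidableEq M]
    [FiniteDimensional F M] [AddCommGroup W] [Module F W] [DecidableEq W]
    (f : M →ₗ[F] W) {r : ℕ} (hr : r ≤ finrank F (LinearMap.range f)) :
    (Finset.univ.filter fun x : M => f x = 0).card ≤
      Fintype.card F ^ (finrank F M - r) := by
  classical
  have hcard : (Finset.univ.filter fun x : M => f x = 0).card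
      = Fintype.card (LinearMap.ker f) := by
    rw [← Fintype.card_subtype]
    exact Fintype.card_congr (Equiv.subtypeEquivRight (by simp [LinearMap.mem_ker])).symm
  rw [hcard, card_eq_pow_finrank (K := F)]
  apply Nat.pow_le_pow_right Fintype.card_pos
  have h2 := LinearMap.finrank_range_add_finrank_ker f
  omega

lemma sum_split {V : Type} [Fintype V] [DecidableEq V] [Zero V] (g : V → ℕ) (X Y : ℕ)
    (h0 : g 0 ≤ X) (h : ∀ v, v ≠ 0 → g v ≤ Y) (hXY : Fintype.card V * Y ≤ X) :
    ∑ v, g v ≤ 2 * X := by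
  have h1 : ∑ v ∈ Finset.univ.erase 0, g v ≤ Fintype.card V * Y := by
    calc ∑ v ∈ Finset.univ.erase 0, g v
        ≤ ∑ _v ∈ Finset.univ.erase (0:V), Y :=
          Finset.sum_le_sum fun v hv => h v (Finset.ne_of_mem_erase hv)
      _ = (Finset.univ.erase (0:V)).card * Y := by rw [Finset.sum_const, smul_eq_mul]
      _ ≤ Fintype.card V * Y :=
          Nat.mul_le_mul_right Y
            ((Finset.card_erase_le).trans (le_of_eq (Finset.card_univ (α := V))))
  have h2 := Finset.sum_erase_add Finset.univ g (Finset.mem_univ (0 : V))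
  omega

end Aux

set_option maxHeartbeats 1000000 in
/-- For every ε > 0 there is a field-size threshold Q beyond which, for any matrices
A1, A2, A3 satisfying the seven rank conditions, at least a (1 − ε) fraction of the triples
(E1, E2, E3) satisfy rank([A1·E1 | A2·E2 | A3·E3]) = k1 + k2 + k3. -/
theorem card_triple_fullColumnRank_ge (p l1 l2 l3 k1 k2 k3 : ℕ) :
    ∀ ε : ℝ, 0 < ε → ∃ Q : ℕ, ∀ (F : Type) [Field F] [Fintype F],
      Q ≤ Fintype.card F →
      ∀ (A1 : Matrix (Fin p) (Fin l1) F) (A2 : Matrix (Fin p) (Fin l2) F)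
        (A3 : Matrix (Fin p) (Fin l3) F),
        k1 ≤ A1.rank → k2 ≤ A2.rank → k3 ≤ A3.rank →
        k1 + k2 ≤ (Matrix.fromCols A1 A2).rank →
        k1 + k3 ≤ (Matrix.fromCols A1 A3).rank →
        k2 + k3 ≤ (Matrix.fromCols A2 A3).rank →
        k1 + k2 + k3 ≤ (Matrix.fromCols A1 (Matrix.fromCols A2 A3)).rank →
        (1 - ε) * (Fintype.card F : ℝ) ^ (l1 * k1 + l2 * k2 + l3 * k3) ≤
          (Nat.card {E : Matrix (Fin l1) (Fin k1) F × Matrix (Fin l2) (Fin k2) F ×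
              Matrix (Fin l3) (Fin k3) F //
            (Matrix.fromCols (A1 * E.1)
              (Matrix.fromCols (A2 * E.2.1) (A3 * E.2.2))).rank = k1 + k2 + k3} : ℝ) := by
  classical
  intro ε hε
  refine ⟨max 2 (⌈(8:ℝ)/ε⌉₊ + 2), ?_⟩
  intro F _ _ hcard A1 A2 A3 h1 h2 h3 h12 h13 h23 h123
  classical
  set q := Fintype.card F with hqdef
  have hq2 : 2 ≤ q := le_trans (le_max_left _ _) hcard
  have hq1 : 1 ≤ q := by omega
  have hqε : (8:ℝ) ≤ ε * ((q:ℝ) - 1) := by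
    have h1' : (⌈(8:ℝ)/ε⌉₊ + 2 : ℕ) ≤ q := le_trans (le_max_right _ _) hcard
    have h2' : (8:ℝ)/ε ≤ ⌈(8:ℝ)/ε⌉₊ := Nat.le_ceil _
    have h3' : ((⌈(8:ℝ)/ε⌉₊ + 2 : ℕ) : ℝ) ≤ (q:ℝ) := by exact_mod_cast h1'
    push_cast at h3'
    have h4' : (8:ℝ)/ε ≤ (q:ℝ) - 1 := by linarith
    have : ε * ((8:ℝ)/ε) ≤ ε * ((q:ℝ) - 1) := by
      apply mul_le_mul_of_nonneg_left h4' hε.le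
    rwa [mul_div_cancel₀ _ (ne_of_gt hε)] at this
  -- k_i ≤ l_i * k_i
  have hk1l : k1 ≤ l1 := le_trans h1 ((A1.rank_le_card_width).trans_eq (Fintype.card_fin l1))
  have hk2l : k2 ≤ l2 := le_trans h2 ((A2.rank_le_card_width).trans_eq (Fintype.card_fin l2))
  have hk3l : k3 ≤ l3 := le_trans h3 ((A3.rank_le_card_width).trans_eq (Fintype.card_fin l3))
  have hk1 : k1 ≤ l1 * k1 := by
    rcases Nat.eq_zero_or_pos k1 with h | h
    · omega
    · exact Nat.le_mul_of_pos_left k1 (lt_of_lt_of_le h hk1l)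
  have hk2 : k2 ≤ l2 * k2 := by
    rcases Nat.eq_zero_or_pos k2 with h | h
    · omega
    · exact Nat.le_mul_of_pos_left k2 (lt_of_lt_of_le h hk2l)
  have hk3 : k3 ≤ l3 * k3 := by
    rcases Nat.eq_zero_or_pos k3 with h | h
    · omega
    · exact Nat.le_mul_of_pos_left k3 (lt_of_lt_of_le h hk3l)
  -- ranges
  set R1 := LinearMap.range A1.mulVecLin with hR1
  set R2 := LinearMap.range A2.mulVecLin with hR2
  set R3 := LinearMap.range A3.mulVecLin with hR3
  have H1 : k1 ≤ finrank F R1 := h1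
  have H2 : k2 ≤ finrank F R2 := h2
  have H3 : k3 ≤ finrank F R3 := h3
  have H12 : k1 + k2 ≤ finrank F ↥(R1 ⊔ R2) := by
    rw [hR1, hR2, ← range_mulVecLin_fromColumns]; exact h12
  have H13 : k1 + k3 ≤ finrank F ↥(R1 ⊔ R3) := by
    rw [hR1, hR3, ← range_mulVecLin_fromColumns]; exact h13
  have H23 : k2 + k3 ≤ finrank F ↥(R2 ⊔ R3) := by
    rw [hR2, hR3, ← range_mulVecLin_fromColumns]; exact h23
  have H123 : k1 + k2 + k3 ≤ finrank F ↥(R1 ⊔ (R2 ⊔ R3)) := by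
    rw [hR1, hR2, hR3, ← range_mulVecLin_fromColumns, ← range_mulVecLin_fromColumns]
    exact h123
  -- per-c rank bound
  have hrange : ∀ c : (Fin k1 → F) × (Fin k2 → F) × (Fin k3 → F),
      (if c.1 = 0 then 0 else k1) + (if c.2.1 = 0 then 0 else k2) +
          (if c.2.2 = 0 then 0 else k3)
        ≤ finrank F (LinearMap.range (Psi A1 A2 A3 c)) := by
    intro c
    rcases eq_or_ne c.1 0 with e1 | e1 <;> rcases eq_or_ne c.2.1 0 with e2 | e2 <;>
      rcases eq_or_ne c.2.2 0 with e3 | e3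
    · rw [if_pos e1, if_pos e2, if_pos e3]
      exact Nat.zero_le _
    · rw [if_pos e1, if_pos e2, if_neg e3]
      refine le_trans (by omega : 0 + 0 + k3 ≤ k3) ?_
      exact le_trans H3 (Submodule.finrank_mono (range_le_Psi_3 A1 A2 A3 e3))
    · rw [if_pos e1, if_neg e2, if_pos e3]
      refine le_trans (by omega : 0 + k2 + 0 ≤ k2) ?_
      exact le_trans H2 (Submodule.finrank_mono (range_le_Psi_2 A1 A2 A3 e2))
    · rw [if_pos e1, if_neg e2, if_neg e3]
      refine le_trans (by omega : 0 + k2 + k3 ≤ k2 + k3) ?_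
      refine le_trans H23 (Submodule.finrank_mono ?_)
      exact sup_le (range_le_Psi_2 A1 A2 A3 e2) (range_le_Psi_3 A1 A2 A3 e3)
    · rw [if_neg e1, if_pos e2, if_pos e3]
      refine le_trans (by omega : k1 + 0 + 0 ≤ k1) ?_
      exact le_trans H1 (Submodule.finrank_mono (range_le_Psi_1 A1 A2 A3 e1))
    · rw [if_neg e1, if_pos e2, if_neg e3]
      refine le_trans (by omega : k1 + 0 + k3 ≤ k1 + k3) ?_
      refine le_trans H13 (Submodule.finrank_mono ?_)
      exact sup_le (range_le_Psi_1 A1 A2 A3 e1) (range_le_Psi_3 A1 A2 A3 e3)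
    · rw [if_neg e1, if_neg e2, if_pos e3]
      refine le_trans (by omega : k1 + k2 + 0 ≤ k1 + k2) ?_
      refine le_trans H12 (Submodule.finrank_mono ?_)
      exact sup_le (range_le_Psi_1 A1 A2 A3 e1) (range_le_Psi_2 A1 A2 A3 e2)
    · rw [if_neg e1, if_neg e2, if_neg e3]
      refine le_trans H123 (Submodule.finrank_mono ?_)
      exact sup_le (range_le_Psi_1 A1 A2 A3 e1)
        (sup_le (range_le_Psi_2 A1 A2 A3 e2) (range_le_Psi_3 A1 A2 A3 e3))
  -- finrank of the matrix-triple space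
  have hN : finrank F (Matrix (Fin l1) (Fin k1) F × Matrix (Fin l2) (Fin k2) F ×
      Matrix (Fin l3) (Fin k3) F) = l1 * k1 + l2 * k2 + l3 * k3 := by
    simp only [Module.finrank_prod, Module.finrank_matrix, Fintype.card_fin,
      Module.finrank_self, mul_one]
    ring
  -- per-c counting bound
  have hg : ∀ c : (Fin k1 → F) × (Fin k2 → F) × (Fin k3 → F),
      (Finset.univ.filter fun E : Matrix (Fin l1) (Fin k1) F × Matrix (Fin l2) (Fin k2) F ×
          Matrix (Fin l3) (Fin k3) F => Psi A1 A2 A3 c E = 0).card ≤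
        q ^ ((l1 * k1 + l2 * k2 + l3 * k3) -
          ((if c.1 = 0 then 0 else k1) + (if c.2.1 = 0 then 0 else k2) +
            (if c.2.2 = 0 then 0 else k3))) := by
    intro c
    have := card_ker_le (F := F) (Psi A1 A2 A3 c) (hrange c)
    rwa [hN] at this
  -- the bridge from rank failure to a kernel vector
  have bridge : ∀ E : Matrix (Fin l1) (Fin k1) F × Matrix (Fin l2) (Fin k2) F ×
      Matrix (Fin l3) (Fin k3) F,
      (fromCols (A1 * E.1) (fromCols (A2 * E.2.1) (A3 * E.2.2))).rank ≠ k1 + k2 + k3 →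
      ∃ c, c ≠ 0 ∧ Psi A1 A2 A3 c E = 0 := by
    intro E hE
    set Mf := fromCols (A1 * E.1) (fromCols (A2 * E.2.1) (A3 * E.2.2)) with hMf
    have key : ∀ x : (Fin k1 ⊕ (Fin k2 ⊕ Fin k3)) → F,
        Mf *ᵥ x = Psi A1 A2 A3 (x ∘ Sum.inl, x ∘ Sum.inr ∘ Sum.inl, x ∘ Sum.inr ∘ Sum.inr) E := by
      intro x
      have hx : x = Sum.elim (x ∘ Sum.inl)
          (Sum.elim (x ∘ Sum.inr ∘ Sum.inl) (x ∘ Sum.inr ∘ Sum.inr)) := by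
        funext y
        rcases y with y | y
        · rfl
        · rcases y with y | y <;> rfl
      conv_lhs => rw [hx]
      rw [hMf, fromCols_mulVec_sumElim, fromCols_mulVec_sumElim, Psi_apply]
      simp only [← Matrix.mulVec_mulVec]
      rw [add_assoc]
    by_contra hcon
    push_neg at hcon
    have hker : LinearMap.ker Mf.mulVecLin = ⊥ := by
      rw [LinearMap.ker_eq_bot']
      intro x hx0
      by_contra hxne
      refine hcon (x ∘ Sum.inl, x ∘ Sum.inr ∘ Sum.inl, x ∘ Sum.inr ∘ Sum.inr) ?_ ?_
      · intro h0
        apply hxne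
        have h01 : x ∘ Sum.inl = 0 := congrArg Prod.fst h0
        have h02 : x ∘ Sum.inr ∘ Sum.inl = 0 := congrArg (fun z => z.2.1) h0
        have h03 : x ∘ Sum.inr ∘ Sum.inr = 0 := congrArg (fun z => z.2.2) h0
        funext y
        rcases y with y | y
        · exact congrFun h01 y
        · rcases y with y | y
          · exact congrFun h02 y
          · exact congrFun h03 y
      · rw [← key]
        exact hx0
    apply hE
    have hr := LinearMap.finrank_range_add_finrank_ker Mf.mulVecLin
    rw [hker, finrank_bot] at hr
    have hdom : finrank F ((Fin k1 ⊕ (Fin k2 ⊕ Fin k3)) → F) = k1 + (k2 + k3) := by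
      simp [Module.finrank_pi]
    rw [hdom] at hr
    show Mf.rank = k1 + k2 + k3
    unfold Matrix.rank
    omega
  -- the bad set
  set T := Finset.univ.filter (fun E : Matrix (Fin l1) (Fin k1) F ×
      Matrix (Fin l2) (Fin k2) F × Matrix (Fin l3) (Fin k3) F =>
    ¬((fromCols (A1 * E.1) (fromCols (A2 * E.2.1) (A3 * E.2.2))).rank = k1 + k2 + k3))
    with hT
  have claim1 : ∀ E ∈ T,
      q - 1 ≤ (Finset.univ.filter fun c : (Fin k1 → F) × (Fin k2 → F) × (Fin k3 → F) =>
        Psi A1 A2 A3 c E = 0).card := by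
    intro E hE
    rw [hT, Finset.mem_filter] at hE
    obtain ⟨c0, hc0ne, hc00⟩ := bridge E hE.2
    have hinj : (Finset.univ.filter fun a : F => a ≠ 0).card ≤
        (Finset.univ.filter fun c : (Fin k1 → F) × (Fin k2 → F) × (Fin k3 → F) =>
          Psi A1 A2 A3 c E = 0).card := by
      apply Finset.card_le_card_of_injOn (fun a => a • c0)
      · intro a _
        rw [Finset.mem_coe, Finset.mem_filter]
        refine ⟨Finset.mem_univ _, ?_⟩
        rw [Psi_smul, hc00, smul_zero]
      · intro a _ b _ hab
        exact smul_left_injective F hc0ne hab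
    refine le_trans (le_of_eq ?_) hinj
    rw [Finset.filter_ne' Finset.univ (0:F), Finset.card_erase_of_mem (Finset.mem_univ 0),
      Finset.card_univ]
  have claim2 : (q - 1) * T.card ≤
      ∑ c : (Fin k1 → F) × (Fin k2 → F) × (Fin k3 → F),
        (Finset.univ.filter fun E : Matrix (Fin l1) (Fin k1) F × Matrix (Fin l2) (Fin k2) F ×
          Matrix (Fin l3) (Fin k3) F => Psi A1 A2 A3 c E = 0).card := by
    calc (q - 1) * T.card = ∑ _E ∈ T, (q - 1) := by
          rw [Finset.sum_const, smul_eq_mul, mul_comm]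
      _ ≤ ∑ E ∈ T, (Finset.univ.filter
            fun c : (Fin k1 → F) × (Fin k2 → F) × (Fin k3 → F) =>
              Psi A1 A2 A3 c E = 0).card := Finset.sum_le_sum claim1
      _ = ∑ E ∈ T, ∑ c ∈ (Finset.univ : Finset ((Fin k1 → F) × (Fin k2 → F) × (Fin k3 → F))),
            if Psi A1 A2 A3 c E = 0 then 1 else 0 := by
          exact Finset.sum_congr rfl fun E _ => Finset.card_filter _ _
      _ = ∑ c ∈ (Finset.univ : Finset ((Fin k1 → F) × (Fin k2 → F) × (Fin k3 → F))),
            ∑ E ∈ T, if Psi A1 A2 A3 c E = 0 then 1 else 0 := Finset.sum_comm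
      _ ≤ _ := by
          apply Finset.sum_le_sum
          intro c _
          rw [← Finset.card_filter]
          exact Finset.card_le_card (Finset.filter_subset_filter _ (Finset.filter_subset _ _))
  -- exponent arithmetic helper
  have hpow : ∀ a b : ℕ, a + b ≤ l1 * k1 + l2 * k2 + l3 * k3 →
      q ^ b * q ^ ((l1 * k1 + l2 * k2 + l3 * k3) - (a + b)) =
        q ^ ((l1 * k1 + l2 * k2 + l3 * k3) - a) := by
    intro a b hab
    rw [← pow_add]
    congr 1
    omega
  have claim3 : (∑ c : (Fin k1 → F) × (Fin k2 → F) × (Fin k3 → F),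
      (Finset.univ.filter fun E : Matrix (Fin l1) (Fin k1) F × Matrix (Fin l2) (Fin k2) F ×
        Matrix (Fin l3) (Fin k3) F => Psi A1 A2 A3 c E = 0).card) ≤
      8 * q ^ (l1 * k1 + l2 * k2 + l3 * k3) := by
    rw [Fintype.sum_prod_type]
    have lvl2 : ∀ (c1 : Fin k1 → F) (c2 : Fin k2 → F),
        (∑ c3 : Fin k3 → F, (Finset.univ.filter
            fun E : Matrix (Fin l1) (Fin k1) F × Matrix (Fin l2) (Fin k2) F ×
              Matrix (Fin l3) (Fin k3) F => Psi A1 A2 A3 (c1, c2, c3) E = 0).card) ≤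
          2 * q ^ ((l1 * k1 + l2 * k2 + l3 * k3) -
            ((if c1 = 0 then 0 else k1) + (if c2 = 0 then 0 else k2))) := by
      intro c1 c2
      have haN : (if c1 = 0 then 0 else k1) + (if c2 = 0 then 0 else k2) ≤ l1 * k1 + l2 * k2 := by
        split_ifs <;> omega
      refine sum_split _
        (q ^ ((l1 * k1 + l2 * k2 + l3 * k3) -
          ((if c1 = 0 then 0 else k1) + (if c2 = 0 then 0 else k2))))
        (q ^ ((l1 * k1 + l2 * k2 + l3 * k3) -
          ((if c1 = 0 then 0 else k1) + (if c2 = 0 then 0 else k2) + k3))) ?_ ?_ ?_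
      · refine (hg (c1, c2, 0)).trans ?_
        apply Nat.pow_le_pow_right hq1
        dsimp only
        have h0' : (if (0 : Fin k3 → F) = 0 then 0 else k3) = 0 := if_pos rfl
        rw [h0']
        omega
      · intro c3 hc3
        refine (hg (c1, c2, c3)).trans ?_
        apply Nat.pow_le_pow_right hq1
        dsimp only
        rw [if_neg hc3]
      · rw [Fintype.card_fun, Fintype.card_fin, ← hqdef,
          hpow _ k3 (by omega)]
    have lvl1 : ∀ c1 : Fin k1 → F,
        (∑ yz : (Fin k2 → F) × (Fin k3 → F), (Finset.univ.filter
            fun E : Matrix (Fin l1) (Fin k1) F × Matrix (Fin l2) (Fin k2) F ×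
              Matrix (Fin l3) (Fin k3) F => Psi A1 A2 A3 (c1, yz) E = 0).card) ≤
          4 * q ^ ((l1 * k1 + l2 * k2 + l3 * k3) - (if c1 = 0 then 0 else k1)) := by
      intro c1
      rw [Fintype.sum_prod_type]
      have step := sum_split
        (fun c2 : Fin k2 → F => ∑ c3 : Fin k3 → F, (Finset.univ.filter
            fun E : Matrix (Fin l1) (Fin k1) F × Matrix (Fin l2) (Fin k2) F ×
              Matrix (Fin l3) (Fin k3) F => Psi A1 A2 A3 (c1, c2, c3) E = 0).card)
        (2 * q ^ ((l1 * k1 + l2 * k2 + l3 * k3) - (if c1 = 0 then 0 else k1)))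
        (2 * q ^ ((l1 * k1 + l2 * k2 + l3 * k3) - ((if c1 = 0 then 0 else k1) + k2)))
        ?_ ?_ ?_
      · refine le_trans step (by omega)
      · refine (lvl2 c1 0).trans ?_
        have h0' : (if (0 : Fin k2 → F) = 0 then 0 else k2) = 0 := if_pos rfl
        rw [h0']
        apply Nat.mul_le_mul_left
        apply Nat.pow_le_pow_right hq1
        omega
      · intro c2 hc2
        refine (lvl2 c1 c2).trans ?_
        rw [if_neg hc2]
      · rw [Fintype.card_fun, Fintype.card_fin, ← hqdef, Nat.mul_left_comm,
          hpow _ k2 (by split_ifs <;> omega)]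
    have top := sum_split
      (fun c1 : Fin k1 → F => ∑ yz : (Fin k2 → F) × (Fin k3 → F), (Finset.univ.filter
          fun E : Matrix (Fin l1) (Fin k1) F × Matrix (Fin l2) (Fin k2) F ×
            Matrix (Fin l3) (Fin k3) F => Psi A1 A2 A3 (c1, yz) E = 0).card)
      (4 * q ^ (l1 * k1 + l2 * k2 + l3 * k3))
      (4 * q ^ ((l1 * k1 + l2 * k2 + l3 * k3) - k1))
      ?_ ?_ ?_
    · refine le_trans top (by omega)
    · refine (lvl1 0).trans ?_
      have h0' : (if (0 : Fin k1 → F) = 0 then 0 else k1) = 0 := if_pos rfl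
      rw [h0', Nat.sub_zero]
    · intro c1 hc1
      refine (lvl1 c1).trans ?_
      rw [if_neg hc1]
    · rw [Fintype.card_fun, Fintype.card_fin, ← hqdef, Nat.mul_left_comm, ← pow_add]
      have hadd : k1 + (l1 * k1 + l2 * k2 + l3 * k3 - k1) = l1 * k1 + l2 * k2 + l3 * k3 := by
        omega
      rw [hadd]
  -- combine
  have claim4 : (q - 1) * T.card ≤ 8 * q ^ (l1 * k1 + l2 * k2 + l3 * k3) :=
    le_trans claim2 claim3
  have hsplit : (Finset.univ.filter (fun E : Matrix (Fin l1) (Fin k1) F ×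
      Matrix (Fin l2) (Fin k2) F × Matrix (Fin l3) (Fin k3) F =>
      (fromCols (A1 * E.1) (fromCols (A2 * E.2.1) (A3 * E.2.2))).rank =
        k1 + k2 + k3)).card + T.card = q ^ (l1 * k1 + l2 * k2 + l3 * k3) := by
    rw [hT, Finset.card_filter_add_card_filter_not, Finset.card_univ,
      card_eq_pow_finrank (K := F), hN]
  have hNatcard : (Nat.card {E : Matrix (Fin l1) (Fin k1) F × Matrix (Fin l2) (Fin k2) F ×
      Matrix (Fin l3) (Fin k3) F //
      (Matrix.fromCols (A1 * E.1)
        (Matrix.fromCols (A2 * E.2.1) (A3 * E.2.2))).rank = k1 + k2 + k3}) =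
      (Finset.univ.filter (fun E : Matrix (Fin l1) (Fin k1) F ×
        Matrix (Fin l2) (Fin k2) F × Matrix (Fin l3) (Fin k3) F =>
        (fromCols (A1 * E.1) (fromCols (A2 * E.2.1) (A3 * E.2.2))).rank =
          k1 + k2 + k3)).card := by
    rw [Nat.card_eq_fintype_card, Fintype.card_subtype]
  rw [hNatcard]
  -- real arithmetic
  have hq1R : (0:ℝ) < (q:ℝ) - 1 := by
    have : (2:ℝ) ≤ (q:ℝ) := by exact_mod_cast hq2
    linarith
  have hc4R : ((q:ℝ) - 1) * (T.card : ℝ) ≤ 8 * (q:ℝ) ^ (l1 * k1 + l2 * k2 + l3 * k3) := by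
    have := (Nat.cast_le (α := ℝ)).mpr claim4
    push_cast [Nat.cast_sub hq1] at this
    convert this using 2 <;> push_cast <;> ring
  have hpow0 : (0:ℝ) < (q:ℝ) ^ (l1 * k1 + l2 * k2 + l3 * k3) := by positivity
  have hTR : (T.card : ℝ) ≤ ε * (q:ℝ) ^ (l1 * k1 + l2 * k2 + l3 * k3) := by
    have hmul : ((q:ℝ) - 1) * (T.card : ℝ) ≤
        ((q:ℝ) - 1) * (ε * (q:ℝ) ^ (l1 * k1 + l2 * k2 + l3 * k3)) := by
      have : (8:ℝ) * (q:ℝ) ^ (l1 * k1 + l2 * k2 + l3 * k3) ≤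
          (ε * ((q:ℝ) - 1)) * (q:ℝ) ^ (l1 * k1 + l2 * k2 + l3 * k3) := by
        apply mul_le_mul_of_nonneg_right hqε hpow0.le
      nlinarith
    exact le_of_mul_le_mul_left hmul hq1R
  have hGT : ((Finset.univ.filter (fun E : Matrix (Fin l1) (Fin k1) F ×
      Matrix (Fin l2) (Fin k2) F × Matrix (Fin l3) (Fin k3) F =>
      (fromCols (A1 * E.1) (fromCols (A2 * E.2.1) (A3 * E.2.2))).rank =
        k1 + k2 + k3)).card : ℝ) + (T.card : ℝ) =
      (q:ℝ) ^ (l1 * k1 + l2 * k2 + l3 * k3) := by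
    exact_mod_cast hsplit
  have hεq : ε * (q:ℝ) ^ (l1 * k1 + l2 * k2 + l3 * k3) ≥ 0 := by positivity
  linarith
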